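/- Fix ρ ≥ 1 and let γ = ⌊4ρ⌋. In the non-Bayesian instance with outcomes ω_1, ω_2, ω_3 (rewards 1, 0, 0), actions a_1,...,a_γ with F_{a_1,ω_1} = F_{a_1,ω_2} = 1/2, F_{a_i,ω_1} = 2^{-i}, F_{a_i,ω_3} = 1 − 2^{-i} for i > 1, costs c_{a_i} = 2^{-i} − (γ−i+2)2^{-γ-2}, plus a zero-cost action ā leading to ω_3: the contract with p_{ω_2} = 1 − (γ+1)2^{-γ-1} and p_{ω_1} = p_{ω_3} = 0 implements action a_1, yielding principal expected utility (γ+1)·2^{-γ-2}. -/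

import Mathlib

lemma nat_le_two_pow (k : ℕ) : (k : ℝ) ≤ 2 ^ k := by
  exact_mod_cast Nat.le_of_lt (Nat.lt_two_pow_self (n := k))

/-- In the non-Bayesian impossibility instance with `γ = ⌊4ρ⌋`, the contract paying
`p_{ω_2} = 1 - (γ+1)2^{-γ-1}` implements `a_1` (agent utility `0`, every deviation gives
at most `0`) and yields principal expected utility `(γ+1)·2^{-γ-2}`. -/
theorem stmt8 (ρ : ℝ) (hρ : 1 ≤ ρ) (γ : ℕ) (hγ : γ = ⌊4*ρ⌋₊)
    (c : ℕ → ℝ)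
    (hc : ∀ i, c i = (1/2:ℝ)^i - ((γ:ℝ) - i + 2) * (1/2:ℝ)^(γ+2))
    (p2 : ℝ) (hp2 : p2 = 1 - ((γ:ℝ)+1) * (1/2:ℝ)^(γ+1)) :
    (1/2) * p2 - c 1 = 0 ∧
    (∀ i ∈ Finset.Icc 2 γ, -(c i) ≤ (1/2) * p2 - c 1) ∧
    1/2 - (1/2) * p2 = ((γ:ℝ)+1) * (1/2:ℝ)^(γ+2) := by
  have h1 : (1/2) * p2 - c 1 = 0 := by
    rw [hp2, hc]; push_cast; ring
  refine ⟨h1, ?_, ?_⟩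
  · intro i hi
    simp only [Finset.mem_Icc] at hi
    rw [h1, hc]
    have key : ((γ:ℝ) - i + 2) * (1/2:ℝ)^(γ+2) ≤ (1/2:ℝ)^i := by
      have hk : ((γ:ℝ) - i + 2) = ((γ + 2 - i : ℕ) : ℝ) := by
        have : i ≤ γ + 2 := le_trans hi.2 (by omega)
        push_cast [Nat.cast_sub this]; ring
      rw [hk]
      have h2 : ((γ + 2 - i : ℕ) : ℝ) ≤ 2 ^ (γ + 2 - i) := nat_le_two_pow _
      have h3 : (2:ℝ) ^ (γ + 2 - i) * (1/2:ℝ)^(γ+2) = (1/2:ℝ)^i := by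
        have hi2 : i + (γ + 2 - i) = γ + 2 := by omega
        rw [one_div, inv_pow, inv_pow, ← hi2, pow_add]
        field_simp; rw [Nat.add_sub_cancel_left]
      calc ((γ + 2 - i : ℕ) : ℝ) * (1/2:ℝ)^(γ+2)
          ≤ 2 ^ (γ + 2 - i) * (1/2:ℝ)^(γ+2) := by
            apply mul_le_mul_of_nonneg_right h2 (by positivity)
        _ = (1/2:ℝ)^i := h3
    linarith
  · rw [hp2]; push_cast; ring
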